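/- Assume μa ≥ 1 and a ≥ 1, and let x̄ = x̄(μ,a) be a solution of q(x̄,μ,a) = 1 − 1/(μa). Then the de Almeida–Thouless quantity AT(μ,a) = μ 𝔼 cosh⁻⁴(z√(μ q(x̄,μ,a)) + μξ x̄) satisfies AT(μ,a) ≤ 1/a ≤ 1. -/

import Mathlib

open MeasureTheory ProbabilityTheory

noncomputable section

def rsRHS (μ a x q : ℝ) : ℝ :=
  ∫ p : ℝ × ℝ, Real.tanh (p.1 * Real.sqrt (μ * q) + μ * p.2 * x) ^ 2
    ∂((gaussianReal 0 1).prod (gaussianReal 0 a.toNNReal))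

lemma continuous_tanh' : Continuous Real.tanh := by
  have h : Real.tanh = fun x => Real.sinh x / Real.cosh x :=
    funext Real.tanh_eq_sinh_div_cosh
  rw [h]
  exact Real.continuous_sinh.div Real.continuous_cosh fun x => (Real.cosh_pos x).ne'

lemma tanh_sq_le_one' (x : ℝ) : Real.tanh x ^ 2 ≤ 1 := by
  have hc := Real.cosh_pos x
  rw [Real.tanh_eq_sinh_div_cosh, div_pow, div_le_one (by positivity)]
  nlinarith [Real.cosh_sq_sub_sinh_sq x]

lemma cosh_zpow_neg_four_le (x : ℝ) :
    Real.cosh x ^ (-4 : ℤ) ≤ 1 - Real.tanh x ^ 2 := by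
  have h1 : 1 ≤ Real.cosh x := Real.one_le_cosh x
  have hpos : (0 : ℝ) < Real.cosh x := by linarith
  have hid := Real.cosh_sq_sub_sinh_sq x
  have h2 : 1 - Real.tanh x ^ 2 = (Real.cosh x ^ 2)⁻¹ := by
    rw [Real.tanh_eq_sinh_div_cosh]
    field_simp
    exact hid
  have h3 : Real.cosh x ^ (-4 : ℤ) = (Real.cosh x ^ (4 : ℕ))⁻¹ := by
    rw [show ((-4 : ℤ)) = -((4 : ℕ) : ℤ) from rfl, zpow_neg, zpow_natCast]
  rw [h2, h3]
  apply inv_anti₀ (by positivity)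
  nlinarith

lemma cosh_zpow_neg_four_bounds (x : ℝ) :
    0 ≤ Real.cosh x ^ (-4 : ℤ) ∧ Real.cosh x ^ (-4 : ℤ) ≤ 1 := by
  have h1 : 1 ≤ Real.cosh x := Real.one_le_cosh x
  have h3 : Real.cosh x ^ (-4 : ℤ) = (Real.cosh x ^ (4 : ℕ))⁻¹ := by
    rw [show ((-4 : ℤ)) = -((4 : ℕ) : ℤ) from rfl, zpow_neg, zpow_natCast]
  rw [h3]
  refine ⟨by positivity, ?_⟩
  rw [inv_le_one_iff₀]
  exact Or.inr (one_le_pow₀ h1)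

/-- The de Almeida–Thouless quantity at the critical point:
if `μa ≥ 1`, `a ≥ 1` and `q̄ = q(x̄,μ,a) = 1 - 1/(μa)`, then
`AT(μ,a) = μ 𝔼 cosh⁻⁴(z√(μq̄) + μξx̄) ≤ 1/a ≤ 1`. -/
theorem AT_le_one
    (μ a : ℝ) (hμ : 0 < μ) (ha : 0 < a) (hμa : 1 ≤ μ * a) (ha1 : 1 ≤ a)
    (xbar qbar : ℝ) (hqbar : qbar ∈ Set.Icc (0 : ℝ) 1)
    (hcons : qbar = rsRHS μ a xbar qbar)
    (hcrit : qbar = 1 - 1 / (μ * a)) :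
    μ * ∫ p : ℝ × ℝ,
        (Real.cosh (p.1 * Real.sqrt (μ * qbar) + μ * p.2 * xbar)) ^ (-4 : ℤ)
        ∂((gaussianReal 0 1).prod (gaussianReal 0 a.toNNReal))
      ≤ 1 / a ∧ 1 / a ≤ 1 := by
  set ν := (gaussianReal 0 1).prod (gaussianReal 0 a.toNNReal) with hν
  set L : ℝ × ℝ → ℝ := fun p => p.1 * Real.sqrt (μ * qbar) + μ * p.2 * xbar with hL
  have hLcont : Continuous L := by fun_prop
  have hfmeas : AEStronglyMeasurable (fun p => Real.cosh (L p) ^ (-4 : ℤ)) ν := by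
    apply Continuous.aestronglyMeasurable
    exact (Real.continuous_cosh.comp hLcont).zpow₀ _
      (fun p => Or.inl (Real.cosh_pos _).ne')
  have hgmeas : AEStronglyMeasurable (fun p => Real.tanh (L p) ^ 2) ν := by
    apply Continuous.aestronglyMeasurable
    exact ((continuous_tanh'.comp hLcont).pow 2)
  have hf : Integrable (fun p => Real.cosh (L p) ^ (-4 : ℤ)) ν := by
    apply (integrable_const (1 : ℝ)).mono' hfmeas
    filter_upwards with p
    obtain ⟨h0, h1⟩ := cosh_zpow_neg_four_bounds (L p)
    rw [Real.norm_eq_abs, abs_of_nonneg h0]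
    exact h1
  have hg : Integrable (fun p => Real.tanh (L p) ^ 2) ν := by
    apply (integrable_const (1 : ℝ)).mono' hgmeas
    filter_upwards with p
    rw [Real.norm_eq_abs, abs_of_nonneg (sq_nonneg _)]
    exact tanh_sq_le_one' (L p)
  have hmono : (∫ p, Real.cosh (L p) ^ (-4 : ℤ) ∂ν)
      ≤ ∫ p, (1 - Real.tanh (L p) ^ 2) ∂ν := by
    apply integral_mono hf ((integrable_const 1).sub hg)
    intro p
    exact cosh_zpow_neg_four_le (L p)
  have hsplit : (∫ p, (1 - Real.tanh (L p) ^ 2) ∂ν) = 1 - qbar := by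
    rw [integral_sub (integrable_const 1) hg, integral_const]
    rw [hcons]
    simp [rsRHS, measure_univ, hν, hL]
  rw [hsplit] at hmono
  have key : μ * (∫ p, Real.cosh (L p) ^ (-4 : ℤ) ∂ν) ≤ 1 / a := by
    calc μ * (∫ p, Real.cosh (L p) ^ (-4 : ℤ) ∂ν) ≤ μ * (1 - qbar) :=
          mul_le_mul_of_nonneg_left hmono hμ.le
      _ = 1 / a := by
          rw [hcrit]
          field_simp
          ring
  exact ⟨key, by rw [div_le_one ha]; exact ha1⟩

end
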